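/- arXiv:1010.1101 — 7 statements merged into one kernel-verified Lean document; each statement's English description precedes it below -/
import Mathlib

section
/- Let A be a commutative ring, n ≥ 1 with n·1_A invertible in A, and let ω ∈ A be a principal n-th root of unity. Then the A-algebra homomorphism from A[X]/(X^n − 1) to the product algebra A^n that sends the class of a polynomial f to the evaluation vector (f(ω^0), f(ω^1), …, f(ω^{n−1})) is bijective, i.e., A[X]/(X^n − 1) is isomorphic to A^n as an A-algebra. -/
open Polynomial Finset

private lemma aux_geom {A : Type*} [CommRing A] {n : ℕ} (hn : 1 ≤ n) {ω : A} (hω : ω ^ n = 1)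
    (hprin : ∀ ν : ℕ, 1 ≤ ν → ν < n → 1 - ω ^ ν ∈ nonZeroDivisors A)
    (m : ℕ) (hm : m % n ≠ 0) :
    ∑ i ∈ Finset.range n, (ω ^ m) ^ i = 0 := by
  have hred : ω ^ m = ω ^ (m % n) := by
    conv_lhs => rw [← Nat.div_add_mod m n]
    rw [pow_add, pow_mul, hω, one_pow, one_mul]
  rw [hred]
  set ν := m % n with hν
  have h1 : (∑ i ∈ Finset.range n, (ω ^ ν) ^ i) * (ω ^ ν - 1) = (ω ^ ν) ^ n - 1 :=
    geom_sum_mul _ _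
  have h2 : (ω ^ ν) ^ n = 1 := by
    rw [← pow_mul, mul_comm, pow_mul, hω, one_pow]
  rw [h2] at h1
  have h3 : (∑ i ∈ Finset.range n, (ω ^ ν) ^ i) * (1 - ω ^ ν) = 0 := by
    linear_combination -h1
  exact (mem_nonZeroDivisors_iff.mp
    (hprin ν (by omega) (Nat.mod_lt _ (by omega)))).2 _ h3

private lemma aux_mod {n l j : ℕ} (hn : 1 ≤ n) (hl : l < n) (hj : j < n) (hne : l ≠ j) :
    (l + j * (n - 1)) % n ≠ 0 := by
  intro h
  obtain ⟨t, ht⟩ := Nat.dvd_of_mod_eq_zero h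
  have hjn : j * (n - 1) + j = j * n := by
    cases n with
    | zero => omega
    | succ k => rw [Nat.succ_sub_one, Nat.mul_succ]
  have key : l + j * n = n * t + j := by rw [← hjn, ← ht]; ring
  have e1 : (l + j * n) % n = l := by
    rw [Nat.add_mul_mod_self_right, Nat.mod_eq_of_lt hl]
  have e2 : (n * t + j) % n = j := by
    rw [Nat.mul_add_mod, Nat.mod_eq_of_lt hj]
  rw [key, e2] at e1
  exact hne e1.symm

private lemma aux_ortho {A : Type*} [CommRing A] {n : ℕ} (hn : 1 ≤ n) {ω : A} (hω : ω ^ n = 1)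
    (hprin : ∀ ν : ℕ, 1 ≤ ν → ν < n → 1 - ω ^ ν ∈ nonZeroDivisors A)
    {l j : ℕ} (hl : l < n) (hj : j < n) :
    ∑ i ∈ Finset.range n, ω ^ (l * i) * (ω ^ (n - 1)) ^ (j * i)
      = if l = j then (n : A) else 0 := by
  have hterm : ∀ i, ω ^ (l * i) * (ω ^ (n - 1)) ^ (j * i) = (ω ^ (l + j * (n - 1))) ^ i := by
    intro i
    rw [← pow_mul, ← pow_mul, ← pow_add]
    congr 1
    ring
  rw [Finset.sum_congr rfl fun i _ => hterm i]
  by_cases h : l = j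
  · subst h
    have hexp : l + l * (n - 1) = l * n := by
      cases n with
      | zero => omega
      | succ k => rw [Nat.succ_sub_one, Nat.mul_succ]; exact Nat.add_comm _ _
    rw [if_pos rfl, hexp, mul_comm, pow_mul, hω, one_pow]
    simp
  · rw [if_neg h]
    exact aux_geom hn hω hprin _ (aux_mod hn hl hj h)

/-- Let `A` be a commutative ring, `n ≥ 1` with `n · 1_A` invertible,
and let `ω ∈ A` be a principal `n`-th root of unity. Then the `A`-algebra homomorphism
`A[X]/(X^n − 1) → A^n` sending the class of a polynomial `f` to its evaluation vector
`(f(ω^0), …, f(ω^{n−1}))` is bijective; i.e. there is an `A`-algebra isomorphism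
`A[X]/(X^n − 1) ≃ A^n` given by evaluation at the powers of `ω`. -/
theorem quotient_iso_pi (A : Type*) [CommRing A] (n : ℕ) (hn : 1 ≤ n)
    (hnunit : IsUnit (n : A)) (ω : A) (hω : ω ^ n = 1)
    (hprin : ∀ ν : ℕ, 1 ≤ ν → ν < n → 1 - ω ^ ν ∈ nonZeroDivisors A) :
    ∃ e : (Polynomial A ⧸ Ideal.span {(Polynomial.X : Polynomial A) ^ n - 1}) ≃ₐ[A]
        (Fin n → A),
      ∀ f : Polynomial A,
        e (Ideal.Quotient.mk (Ideal.span {(Polynomial.X : Polynomial A) ^ n - 1}) f) =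
          fun i : Fin n => f.eval (ω ^ (i : ℕ)) := by
  classical
  obtain ⟨ninv, hninv⟩ : ∃ c : A, (n : A) * c = 1 := by
    obtain ⟨u, hu⟩ := hnunit
    exact ⟨↑u⁻¹, by rw [← hu]; exact_mod_cast u.mul_inv⟩
  set ωinv : A := ω ^ (n - 1) with hωinv
  set φ : Polynomial A →ₐ[A] (Fin n → A) :=
    Pi.algHom _ _ (fun i : Fin n => Polynomial.aeval (ω ^ (i : ℕ))) with hφdef
  have hφeval : ∀ (f : Polynomial A) (i : Fin n), φ f i = f.eval (ω ^ (i : ℕ)) := by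
    intro f i
    simp [hφdef, Polynomial.coe_aeval_eq_eval]
  have hφp : φ ((X : Polynomial A) ^ n - 1) = 0 := by
    funext i
    rw [hφeval]
    simp only [eval_sub, eval_pow, eval_X, eval_one, Pi.zero_apply]
    rw [← pow_mul, mul_comm (i : ℕ) n, pow_mul, hω, one_pow, sub_self]
  have hker : ∀ a ∈ Ideal.span {(X : Polynomial A) ^ n - 1}, φ a = 0 := by
    intro a ha
    rw [Ideal.mem_span_singleton] at ha
    obtain ⟨q, rfl⟩ := ha
    rw [map_mul, hφp, zero_mul]
  set φbar := Ideal.Quotient.liftₐ _ φ hker with hφbar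
  have hφbarmk : ∀ f : Polynomial A,
      φbar (Ideal.Quotient.mk (Ideal.span {(X : Polynomial A) ^ n - 1}) f) = φ f := by
    intro f
    rw [hφbar, Ideal.Quotient.liftₐ_apply]
    rfl
  -- surjectivity
  have hsurj : Function.Surjective φbar := by
    intro a
    refine ⟨Ideal.Quotient.mk _
      (∑ j ∈ Finset.range n, C (ninv * ∑ i : Fin n, a i * ωinv ^ ((i : ℕ) * j)) * X ^ j), ?_⟩
    rw [hφbarmk]
    funext k
    rw [hφeval, Polynomial.eval_finset_sum]
    simp only [eval_mul, eval_C, eval_pow, eval_X]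
    have step1 : ∀ j ∈ Finset.range n,
        (ninv * ∑ i : Fin n, a i * ωinv ^ ((i : ℕ) * j)) * (ω ^ (k : ℕ)) ^ j
          = ∑ i : Fin n, ninv * a i * (ω ^ ((k : ℕ) * j) * ωinv ^ ((i : ℕ) * j)) := by
      intro j _
      rw [Finset.mul_sum, Finset.sum_mul]
      refine Finset.sum_congr rfl fun i _ => ?_
      rw [← pow_mul]
      ring
    rw [Finset.sum_congr rfl step1, Finset.sum_comm]
    have step2 : ∀ i : Fin n, ∑ j ∈ Finset.range n,
        ninv * a i * (ω ^ ((k : ℕ) * j) * ωinv ^ ((i : ℕ) * j))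
          = ninv * a i * (if (k : ℕ) = (i : ℕ) then (n : A) else 0) := by
      intro i
      rw [← Finset.mul_sum, aux_ortho hn hω hprin k.isLt i.isLt]
    rw [Finset.sum_congr rfl fun i _ => step2 i]
    rw [Finset.sum_eq_single k]
    · rw [if_pos rfl]
      linear_combination a k * hninv
    · intro i _ hik
      rw [if_neg (fun h => hik (Fin.ext h.symm)), mul_zero]
    · intro h
      exact absurd (Finset.mem_univ k) h
  -- injectivity
  have hker0 : ∀ f : Polynomial A, φ f = 0 →
      f ∈ Ideal.span {(X : Polynomial A) ^ n - 1} := by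
    intro f hf
    rcases subsingleton_or_nontrivial A with hsub | hnontriv
    · have : f = 0 := Subsingleton.elim _ _
      rw [this]; exact Ideal.zero_mem _
    · have hq : ((X : Polynomial A) ^ n - 1).Monic := by
        simpa using monic_X_pow_sub_C (1 : A) (show n ≠ 0 by omega)
      set r : Polynomial A := f %ₘ ((X : Polynomial A) ^ n - 1) with hr
      have hdeg : r.natDegree < n := by
        by_cases hr0 : r = 0
        · rw [hr0]; simpa using (show 0 < n by omega)
        · rw [natDegree_lt_iff_degree_lt hr0]
          have := degree_modByMonic_lt f hq
          have hdq : ((X : Polynomial A) ^ n - 1).degree = (n : ℕ) := by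
            simpa using degree_X_pow_sub_C (show 0 < n by omega) (1 : A)
          rw [hdq] at this
          exact this
      have hfd : r + ((X : Polynomial A) ^ n - 1) * (f /ₘ ((X : Polynomial A) ^ n - 1)) = f :=
        modByMonic_add_div f _
      have hφr : φ r = 0 := by
        have : φ f = φ r + φ ((X : Polynomial A) ^ n - 1) * φ (f /ₘ ((X : Polynomial A) ^ n - 1)) := by
          rw [← map_mul, ← map_add, hfd]
        rw [hf, hφp, zero_mul, add_zero] at this
        exact this.symm
      have hevalr : ∀ k, k < n → r.eval (ω ^ k) = 0 := by
        intro k hk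
        have := congrFun hφr ⟨k, hk⟩
        rw [hφeval] at this
        exact this
      have hcoeff : ∀ j, j < n → r.coeff j = 0 := by
        intro j hj
        have h0 : ∑ k ∈ Finset.range n, ωinv ^ (j * k) * r.eval (ω ^ k) = 0 :=
          Finset.sum_eq_zero fun k hk => by
            rw [hevalr k (Finset.mem_range.mp hk), mul_zero]
        have h1 : ∀ k ∈ Finset.range n, ωinv ^ (j * k) * r.eval (ω ^ k)
            = ∑ l ∈ Finset.range n, r.coeff l * (ω ^ (l * k) * ωinv ^ (j * k)) := by
          intro k _
          rw [eval_eq_sum_range' hdeg, Finset.mul_sum]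
          refine Finset.sum_congr rfl fun l _ => ?_
          rw [show ((ω : A) ^ k) ^ l = ω ^ (l * k) by rw [← pow_mul, mul_comm k l]]
          ring
        rw [Finset.sum_congr rfl h1, Finset.sum_comm] at h0
        have h2 : ∀ l ∈ Finset.range n, ∑ k ∈ Finset.range n,
            r.coeff l * (ω ^ (l * k) * ωinv ^ (j * k))
              = r.coeff l * (if l = j then (n : A) else 0) := by
          intro l hl
          rw [← Finset.mul_sum, aux_ortho hn hω hprin (Finset.mem_range.mp hl) hj]
        rw [Finset.sum_congr rfl h2, Finset.sum_eq_single j] at h0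
        · rw [if_pos rfl] at h0
          linear_combination ninv * h0 - r.coeff j * hninv
        · intro l _ hlj
          rw [if_neg hlj, mul_zero]
        · intro hj'
          exact absurd (Finset.mem_range.mpr hj) hj'
      have hr0 : r = 0 := by
        ext m
        by_cases hm : m < n
        · simpa using hcoeff m hm
        · simpa using coeff_eq_zero_of_natDegree_lt (lt_of_lt_of_le hdeg (by omega))
      rw [← hfd, hr0, zero_add]
      exact Ideal.mem_span_singleton.mpr (Dvd.intro _ rfl)
  have hinj : Function.Injective φbar := by
    intro x y hxy
    obtain ⟨f, rfl⟩ := Ideal.Quotient.mk_surjective x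
    obtain ⟨g, rfl⟩ := Ideal.Quotient.mk_surjective y
    rw [hφbarmk, hφbarmk] at hxy
    have : φ (f - g) = 0 := by rw [map_sub, hxy, sub_self]
    exact Ideal.Quotient.eq.mpr (hker0 _ this)
  refine ⟨AlgEquiv.ofBijective φbar ⟨hinj, hsurj⟩, fun f => ?_⟩
  show φbar (Ideal.Quotient.mk _ f) = _
  rw [hφbarmk]
  funext i
  exact hφeval f i
end

section
/- Let k be a field of characteristic different from 2 and let n = 2^m for some m ≥ 0. In the quotient ring A_n = k[X]/(X^n + 1), the residue class x of X is a principal 2n-th root of unity; that is, x^{2n} = 1 and for every ν with 1 ≤ ν < 2n, the element 1 − x^ν is not a zero divisor in A_n. -/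
/-- Let `k` be a field of characteristic different from 2 and
`n = 2 ^ m`. In `A_n = k[X]/(X^n + 1)` the residue class `x` of `X` is a principal
`2n`-th root of unity: `x ^ (2n) = 1` and `1 - x ^ ν` is not a zero divisor for all
`1 ≤ ν < 2n`. -/
theorem schoenhage_strassen_root (k : Type*) [Field k] (hchar : ringChar k ≠ 2)
    (m n : ℕ) (hn : n = 2 ^ m) :
    (Ideal.Quotient.mk (Ideal.span {(Polynomial.X : Polynomial k) ^ n + 1})
        Polynomial.X) ^ (2 * n) = 1 ∧
      ∀ ν : ℕ, 1 ≤ ν → ν < 2 * n →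
        1 - (Ideal.Quotient.mk (Ideal.span {(Polynomial.X : Polynomial k) ^ n + 1})
              Polynomial.X) ^ ν ∈
          nonZeroDivisors
            (Polynomial k ⧸ Ideal.span {(Polynomial.X : Polynomial k) ^ n + 1}) := by
  set f := Ideal.Quotient.mk (Ideal.span {(Polynomial.X : Polynomial k) ^ n + 1}) with hf
  set x := f Polynomial.X with hxdef
  have hnpos : 0 < n := hn ▸ Nat.pow_pos (n := m) (by norm_num)
  -- x ^ n = -1
  have hx : x ^ n = -1 := by
    have h0 : f ((Polynomial.X : Polynomial k) ^ n + 1) = 0 :=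
      Ideal.Quotient.eq_zero_iff_mem.mpr (Ideal.subset_span rfl)
    rw [map_add, map_pow, map_one] at h0
    linear_combination h0
  have hx2n : x ^ (2 * n) = 1 := by
    rw [mul_comm, pow_mul, hx]
    ring
  refine ⟨hx2n, fun ν hν1 hν2n => ?_⟩
  -- 2 is a unit in the quotient
  have h2k : (2 : k) ≠ 0 := Ring.two_ne_zero hchar
  have h2 : IsUnit (2 : Polynomial k ⧸
      Ideal.span {(Polynomial.X : Polynomial k) ^ n + 1}) := by
    have hC : IsUnit (2 : Polynomial k) := by
      rw [show (2 : Polynomial k) = Polynomial.C 2 from (map_ofNat Polynomial.C 2).symm]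
      exact Polynomial.isUnit_C.mpr (isUnit_iff_ne_zero.mpr h2k)
    have := hC.map f
    rwa [map_ofNat] at this
  set d := Nat.gcd ν (2 * n) with hd
  have hdpos : 0 < d := Nat.gcd_pos_of_pos_left _ (by omega)
  have hddvd2n : d ∣ 2 * n := Nat.gcd_dvd_right _ _
  have hdleν : d ≤ ν := Nat.le_of_dvd (by omega) (Nat.gcd_dvd_left _ _)
  -- d divides n
  have hddvdn : d ∣ n := by
    have h2n : 2 * n = 2 ^ (m + 1) := by rw [hn]; ring
    obtain ⟨j, hj, hjd⟩ := (Nat.dvd_prime_pow Nat.prime_two).mp (h2n ▸ hddvd2n)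
    have hjm : j ≤ m := by
      rcases Nat.lt_or_ge j (m + 1) with h | h
      · omega
      · exfalso
        have : 2 ^ (m + 1) ≤ d := hjd ▸ Nat.pow_le_pow_right (by norm_num) h
        omega
    rw [hn, hjd]
    exact pow_dvd_pow 2 hjm
  -- 1 - x ^ d is a unit (it divides 2)
  have hxd : IsUnit (1 - x ^ d) := by
    refine isUnit_of_dvd_unit ?_ h2
    have : (1 - x ^ d) ∣ 1 - (x ^ d) ^ (n / d) := one_sub_dvd_one_sub_pow _ _
    rwa [← pow_mul, Nat.mul_div_cancel' hddvdn, hx, sub_neg_eq_add,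
      show (1 : Polynomial k ⧸ Ideal.span {(Polynomial.X : Polynomial k) ^ n + 1}) + 1
        = 2 by ring] at this
  -- 1 - x ^ ν divides 1 - x ^ d : Bezout
  have hcop : Nat.Coprime (ν / d) (2 * n / d) := Nat.coprime_div_gcd_div_gcd hdpos
  have h2nd : 1 < 2 * n / d := by
    have := Nat.div_lt_div_of_lt_of_dvd hddvd2n (show d < 2 * n by omega)
    have := Nat.div_self hdpos
    have hdd : d / d ≤ ν / d := Nat.div_le_div_right hdleν
    omega
  obtain ⟨u, -, hu⟩ := Nat.exists_mul_mod_eq_one_of_coprime hcop h2nd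
  -- ν * u = d + 2 * n * q
  have hq : ∃ q : ℕ, ν * u = d + 2 * n * q := by
    obtain ⟨Q, h1⟩ : ∃ Q, ν / d * u = 2 * n / d * Q + 1 :=
      ⟨(ν / d * u) / (2 * n / d), by
        conv_lhs => rw [← Nat.div_add_mod (ν / d * u) (2 * n / d), hu]⟩
    have h2 : d * (ν / d) = ν := Nat.mul_div_cancel' (Nat.gcd_dvd_left _ _)
    have h3 : d * (2 * n / d) = 2 * n := Nat.mul_div_cancel' hddvd2n
    refine ⟨Q, ?_⟩
    calc ν * u = d * (ν / d * u) := by rw [← mul_assoc, h2]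
      _ = d * (2 * n / d * Q + 1) := by rw [h1]
      _ = d + 2 * n * Q := by rw [mul_add, mul_one, ← mul_assoc, h3]; ring
  obtain ⟨q, hq⟩ := hq
  have hdvd : (1 - x ^ ν) ∣ (1 - x ^ d) := by
    have h1 : (1 - x ^ ν) ∣ 1 - (x ^ ν) ^ u := one_sub_dvd_one_sub_pow _ _
    rwa [← pow_mul, hq, pow_add, pow_mul, hx2n, one_pow, mul_one] at h1
  exact (isUnit_of_dvd_unit hdvd hxd).mem_nonZeroDivisors
end

section
/- Let k be a field of characteristic 2 and let N = 3^ν for some ν ≥ 0. In the quotient ring B_N = k[X]/(X^{2N} + X^N + 1), the residue class x of X is a principal 3N-th root of unity; that is, x^{3N} = 1 and for every μ with 1 ≤ μ < 3N, the element 1 − x^μ is not a zero divisor in B_N. -/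
open Polynomial

private lemma one_sub_dvd_one_sub_zpow {R : Type*} [CommRing R] (v : Rˣ) (n : ℤ) :
    (1 - (v : R)) ∣ (1 - ((v ^ n : Rˣ) : R)) := by
  have hinv : (1 - (v : R)) ∣ (1 - ((v⁻¹ : Rˣ) : R)) := by
    have h : (1 - ((v⁻¹ : Rˣ) : R)) = ((v⁻¹ : Rˣ) : R) * ((v : R) - 1) := by
      rw [mul_sub, Units.inv_mul, mul_one]
    rw [h]
    exact Dvd.dvd.mul_left ⟨-1, by ring⟩ _
  cases n with
  | ofNat m =>
      simpa [zpow_natCast, Units.val_pow_eq_pow_val] using one_sub_dvd_one_sub_pow (v : R) m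
  | negSucc m =>
      have h1 : (v ^ (Int.negSucc m) : Rˣ) = (v⁻¹) ^ (m + 1) := by
        rw [zpow_negSucc, ← inv_pow]
      rw [h1, Units.val_pow_eq_pow_val]
      exact dvd_trans hinv (one_sub_dvd_one_sub_pow ((v⁻¹ : Rˣ) : R) (m + 1))

set_option maxHeartbeats 1000000 in
/-- Let `k` be a field of characteristic 2 and `N = 3 ^ ν`. In
`B_N = k[X]/(X^{2N} + X^N + 1)` the residue class `x` of `X` is a principal `3N`-th
root of unity: `x ^ (3N) = 1` and `1 - x ^ μ` is not a zero divisor for all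
`1 ≤ μ < 3N`. -/
theorem schoenhage_root (k : Type*) [Field k] [CharP k 2] (ν N : ℕ) (hN : N = 3 ^ ν) :
    (Ideal.Quotient.mk
        (Ideal.span {(Polynomial.X : Polynomial k) ^ (2 * N) + Polynomial.X ^ N + 1})
        Polynomial.X) ^ (3 * N) = 1 ∧
      ∀ μ : ℕ, 1 ≤ μ → μ < 3 * N →
        1 - (Ideal.Quotient.mk
              (Ideal.span
                {(Polynomial.X : Polynomial k) ^ (2 * N) + Polynomial.X ^ N + 1})
              Polynomial.X) ^ μ ∈
          nonZeroDivisors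
            (Polynomial k ⧸
              Ideal.span
                {(Polynomial.X : Polynomial k) ^ (2 * N) + Polynomial.X ^ N + 1}) := by
  set f : Polynomial k := X ^ (2 * N) + X ^ N + 1 with hf
  set mk := Ideal.Quotient.mk (Ideal.span {f}) with hmk
  set x := mk X with hx
  have hNpos : 0 < N := by rw [hN]; positivity
  -- basic relation in the quotient
  have h0 : x ^ (2 * N) + x ^ N + 1 = 0 := by
    have : mk f = 0 := Ideal.Quotient.eq_zero_iff_mem.mpr (Ideal.subset_span rfl)
    simpa [hf, map_add, map_pow, map_one] using this
  -- characteristic two in the quotient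
  have h2 : (2 : Polynomial k ⧸ Ideal.span {f}) = 0 := by
    have h2' : (2 : Polynomial k) = 0 := by
      have := CharP.cast_eq_zero (Polynomial k) 2
      simpa using this
    calc (2 : Polynomial k ⧸ Ideal.span {f}) = mk 2 := (map_ofNat mk 2).symm
      _ = 0 := by rw [h2', map_zero]
  have e2 : x ^ (2 * N) = (x ^ N) ^ 2 := by rw [← pow_mul, Nat.mul_comm]
  have e3 : x ^ (3 * N) = (x ^ N) ^ 3 := by rw [← pow_mul, Nat.mul_comm]
  rw [e2] at h0
  -- x ^ (3N) = 1
  have hx3N : x ^ (3 * N) = 1 := by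
    have key : x ^ (3 * N) - 1 = (x ^ N - 1) * ((x ^ N) ^ 2 + x ^ N + 1) := by
      rw [e3]; ring
    rw [h0, mul_zero, sub_eq_zero] at key
    exact key
  refine ⟨hx3N, fun μ hμ1 hμ2 => ?_⟩
  -- x as a unit
  have hxu : x * x ^ (3 * N - 1) = 1 := by
    rw [← pow_succ', Nat.sub_add_cancel (by omega)]
    exact hx3N
  set u : (Polynomial k ⧸ Ideal.span {f})ˣ := ⟨x, x ^ (3 * N - 1), hxu, by rw [mul_comm]; exact hxu⟩ with hu
  have hu3N : u ^ (3 * N) = 1 := Units.ext (by simpa [Units.val_pow_eq_pow_val] using hx3N)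
  -- 1 - x^N is a unit
  have hunitN : IsUnit (1 - x ^ N) := by
    refine IsUnit.of_mul_eq_one (x ^ N) ?_
    linear_combination -h0 + (x ^ N) * h2
  -- gcd facts
  set g := Nat.gcd μ (3 * N) with hg
  have hgpos : 0 < g := Nat.gcd_pos_of_pos_left _ hμ1
  have hgμ : g ∣ μ := Nat.gcd_dvd_left _ _
  have hgN : g ∣ N := by
    have h3 : g ∣ 3 ^ (ν + 1) := by
      have : (3 : ℕ) * N = 3 ^ (ν + 1) := by rw [hN, pow_succ, Nat.mul_comm]
      exact this ▸ Nat.gcd_dvd_right _ _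
    obtain ⟨j, hj, hgj⟩ := (Nat.dvd_prime_pow Nat.prime_three).mp h3
    have h3N : 3 * N = 3 ^ (ν + 1) := by rw [hN, pow_succ, Nat.mul_comm]
    have hjν : j ≤ ν := by
      by_contra hc
      have hj' : j = ν + 1 := le_antisymm hj (by omega)
      have hle : g ≤ μ := Nat.le_of_dvd hμ1 hgμ
      rw [hgj, hj', ← h3N] at hle
      omega
    rw [hN, hgj]
    exact pow_dvd_pow 3 hjν
  -- 1 - x^g is a unit
  have hunitg : IsUnit (1 - x ^ g) := by
    obtain ⟨t, ht⟩ := hgN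
    have : (1 - x ^ g) ∣ (1 - x ^ N) := by
      have := one_sub_dvd_one_sub_pow (x ^ g) t
      rwa [← pow_mul, ← ht] at this
    exact isUnit_of_dvd_unit this hunitN
  -- Bezout: x^g is a power of x^μ (as units)
  obtain ⟨p, q, hbez⟩ : ∃ p q : ℤ, (g : ℤ) = μ * p + (3 * N : ℕ) * q :=
    ⟨Nat.gcdA μ (3 * N), Nat.gcdB μ (3 * N), by exact_mod_cast Nat.gcd_eq_gcd_ab μ (3 * N)⟩
  have hug : u ^ g = (u ^ μ) ^ p := by
    have : u ^ (g : ℤ) = (u ^ (μ : ℤ)) ^ p * (u ^ ((3 * N : ℕ) : ℤ)) ^ q := by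
      rw [← zpow_mul, ← zpow_mul, ← zpow_add, ← hbez]
    rwa [zpow_natCast, zpow_natCast, zpow_natCast, hu3N, one_zpow, mul_one] at this
  -- conclude
  have hdvd : (1 - x ^ μ) ∣ (1 - x ^ g) := by
    have hd := one_sub_dvd_one_sub_zpow (u ^ μ) p
    rw [← hug] at hd
    simpa [Units.val_pow_eq_pow_val] using hd
  exact (isUnit_of_dvd_unit hdvd hunitg).mem_nonZeroDivisors
end

section
/- Let k be a field and m ≥ 1 an integer not divisible by the characteristic of k (i.e., m·1_k ≠ 0). In the quotient ring C_m = k[X]/(Φ_m(X)), where Φ_m denotes the m-th cyclotomic polynomial, the residue class x of X is a principal m-th root of unity; that is, x^m = 1 and for every ν with 1 ≤ ν < m, the element 1 − x^ν is not a zero divisor in C_m. -/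
open Polynomial

private lemma aux_mod_s8 {R : Type*} [CommRing R] (x g : R) (a b : ℕ)
    (ha : g ∣ x ^ a - 1) (hb : g ∣ x ^ b - 1) : g ∣ x ^ (b % a) - 1 := by
  have h1 : x ^ a - 1 ∣ x ^ (a * (b / a)) - 1 := by
    have := sub_dvd_pow_sub_pow (x ^ a) 1 (b / a)
    simpa [← pow_mul] using this
  have h2 : x ^ (b % a) - 1 = (x ^ b - 1) - x ^ (b % a) * (x ^ (a * (b / a)) - 1) := by
    have hba : b % a + a * (b / a) = b := Nat.mod_add_div b a
    rw [mul_sub, mul_one, ← pow_add, hba]; ring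
  rw [h2]
  exact dvd_sub hb ((ha.trans h1).mul_left _)

private lemma aux_gcd {R : Type*} [CommRing R] (x g : R) :
    ∀ a b : ℕ, g ∣ x ^ a - 1 → g ∣ x ^ b - 1 → g ∣ x ^ (Nat.gcd a b) - 1 := by
  intro a
  induction a using Nat.strong_induction_on with
  | _ a ih =>
    intro b ha hb
    match a with
    | 0 => simpa using hb
    | Nat.succ n =>
      rw [Nat.gcd_succ]
      exact ih _ (Nat.mod_lt _ (Nat.succ_pos n)) _ (aux_mod_s8 x g _ _ ha hb) ha

/-- Let `k` be a field and `m ≥ 1` not divisible by the characteristic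
of `k` (i.e. `m · 1_k ≠ 0`). In `C_m = k[X]/(Φ_m(X))`, where `Φ_m` is the `m`-th
cyclotomic polynomial, the residue class `x` of `X` is a principal `m`-th root of
unity: `x ^ m = 1` and `1 - x ^ ν` is not a zero divisor for all `1 ≤ ν < m`. -/
theorem cyclotomic_quotient_root (k : Type*) [Field k] (m : ℕ) (hm : 1 ≤ m)
    (hchar : (m : k) ≠ 0) :
    (Ideal.Quotient.mk (Ideal.span {Polynomial.cyclotomic m k}) Polynomial.X) ^ m = 1 ∧
      ∀ ν : ℕ, 1 ≤ ν → ν < m →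
        1 - (Ideal.Quotient.mk (Ideal.span {Polynomial.cyclotomic m k})
              Polynomial.X) ^ ν ∈
          nonZeroDivisors (Polynomial k ⧸ Ideal.span {Polynomial.cyclotomic m k}) := by
  classical
  set I := Ideal.span {Polynomial.cyclotomic m k}
  have hsep : (X ^ m - 1 : k[X]).Separable := by
    simpa using Polynomial.separable_X_pow_sub_C (1 : k) hchar one_ne_zero
  have hsqf : Squarefree (X ^ m - 1 : k[X]) := hsep.squarefree
  have hdvd : cyclotomic m k ∣ X ^ m - 1 := cyclotomic.dvd_X_pow_sub_one m k
  have hXm : (Ideal.Quotient.mk I (X ^ m - 1 : k[X])) = 0 :=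
    Ideal.Quotient.eq_zero_iff_mem.2 (Ideal.mem_span_singleton.2 hdvd)
  constructor
  · have := hXm
    rw [map_sub, map_pow, map_one, sub_eq_zero] at this
    exact this
  · intro ν hν1 hνm
    -- coprimality of `Φ_m` and `X ^ ν - 1`
    set g := EuclideanDomain.gcd (cyclotomic m k) (X ^ ν - 1 : k[X]) with hg
    have hg1 : g ∣ cyclotomic m k := EuclideanDomain.gcd_dvd_left _ _
    have hg2 : g ∣ (X ^ ν - 1 : k[X]) := EuclideanDomain.gcd_dvd_right _ _
    have hg3 : g ∣ (X ^ m - 1 : k[X]) := hg1.trans hdvd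
    have hgd : g ∣ (X ^ Nat.gcd m ν - 1 : k[X]) := aux_gcd X g m ν hg3 hg2
    have hdmem : Nat.gcd m ν ∈ m.properDivisors := by
      refine Nat.mem_properDivisors.2 ⟨Nat.gcd_dvd_left _ _, ?_⟩
      exact lt_of_le_of_lt (Nat.le_of_dvd hν1 (Nat.gcd_dvd_right m ν)) hνm
    have hprod : (X ^ Nat.gcd m ν - 1 : k[X]) * cyclotomic m k ∣ X ^ m - 1 :=
      X_pow_sub_one_mul_cyclotomic_dvd_X_pow_sub_one_of_dvd k hdmem
    have hgg : g * g ∣ (X ^ m - 1 : k[X]) := (mul_dvd_mul hgd hg1).trans hprod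
    have hunit : IsUnit g := hsqf g hgg
    have hcop : IsCoprime (cyclotomic m k) (X ^ ν - 1 : k[X]) :=
      EuclideanDomain.gcd_isUnit_iff.1 hunit
    have hcop' : IsCoprime (cyclotomic m k) (1 - X ^ ν : k[X]) := by
      have := hcop.neg_right
      simpa [neg_sub] using this
    obtain ⟨u, v, huv⟩ := hcop'
    have : (Ideal.Quotient.mk I v) * (Ideal.Quotient.mk I (1 - X ^ ν : k[X])) = 1 := by
      have h0 : Ideal.Quotient.mk I (cyclotomic m k) = 0 :=
        Ideal.Quotient.eq_zero_iff_mem.2 (Ideal.mem_span_singleton.2 dvd_rfl)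
      have := congrArg (Ideal.Quotient.mk I) huv
      rw [map_add, map_one, map_mul, map_mul, h0, mul_zero, zero_add] at this
      exact this
    have hu : IsUnit (Ideal.Quotient.mk I (1 - X ^ ν : k[X])) :=
      IsUnit.of_mul_eq_one _ (by rwa [mul_comm] at this)
    have heq : Ideal.Quotient.mk I (1 - X ^ ν : k[X]) =
        1 - (Ideal.Quotient.mk I Polynomial.X) ^ ν := by
      rw [map_sub, map_one, map_pow]
    rw [heq] at hu
    exact hu.mem_nonZeroDivisors
end

section
/- Let A be a commutative ring, n ≥ 1, and suppose A contains a principal 2n-th root of unity ω. Then the A-algebras A[X]/(X^n + 1) and A[X]/(X^n − 1) are isomorphic; an isomorphism is induced by the substitution X ↦ ωX. -/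
open Polynomial

/-- Let `A` be a commutative ring, `n ≥ 1`, and suppose `A` contains a
principal `2n`-th root of unity `ω`. Then the `A`-algebras `A[X]/(X^n + 1)` and
`A[X]/(X^n − 1)` are isomorphic, an isomorphism being induced by the substitution
`X ↦ ωX`. -/
theorem quotient_iso_of_principal_root (A : Type*) [CommRing A] (n : ℕ) (hn : 1 ≤ n)
    (ω : A) (hω : ω ^ (2 * n) = 1)
    (hprin : ∀ ν : ℕ, 1 ≤ ν → ν < 2 * n → 1 - ω ^ ν ∈ nonZeroDivisors A) :
    ∃ e : (Polynomial A ⧸ Ideal.span {(Polynomial.X : Polynomial A) ^ n + 1}) ≃ₐ[A]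
        (Polynomial A ⧸ Ideal.span {(Polynomial.X : Polynomial A) ^ n - 1}),
      ∀ f : Polynomial A,
        e (Ideal.Quotient.mk (Ideal.span {(Polynomial.X : Polynomial A) ^ n + 1}) f) =
          Ideal.Quotient.mk (Ideal.span {(Polynomial.X : Polynomial A) ^ n - 1})
            (f.comp (Polynomial.C ω * Polynomial.X)) := by
  -- Step 1 : ω ^ n = -1
  have hsq : ω ^ n * ω ^ n = 1 := by
    rw [← pow_add, show n + n = 2 * n by ring]; exact hω
  have hωn : ω ^ n = -1 := by
    have hnzd := hprin n hn (by omega)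
    have h0 : 1 + ω ^ n = 0 :=
      (mem_nonZeroDivisors_iff.mp hnzd).2 (1 + ω ^ n) (by linear_combination -hsq)
    linear_combination h0
  -- the "inverse" root
  set ω' : A := ω ^ (2 * n - 1) with hω'def
  have hinv : ω * ω' = 1 := by
    rw [hω'def, ← pow_succ', show (2 * n - 1) + 1 = 2 * n by omega]
    exact hω
  have hω'n : ω' ^ n = -1 := by
    have h : ω' ^ n * ω ^ n = 1 := by
      rw [← mul_pow, mul_comm ω' ω, hinv, one_pow]
    rw [hωn] at h
    linear_combination -h
  set I : Ideal (Polynomial A) := Ideal.span {(X : Polynomial A) ^ n + 1} with hI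
  set J : Ideal (Polynomial A) := Ideal.span {(X : Polynomial A) ^ n - 1} with hJ
  -- forward algebra hom
  have hFgen : (Ideal.Quotient.mkₐ A J).comp (aeval (C ω * X)) ((X : Polynomial A) ^ n + 1) = 0 := by
    have h1 : aeval (C ω * X) ((X : Polynomial A) ^ n + 1) = -((X : Polynomial A) ^ n - 1) := by
      rw [map_add, map_one, map_pow, aeval_X, mul_pow, ← C_pow, hωn]
      simp only [map_neg, map_one]
      ring
    rw [AlgHom.comp_apply, h1, Ideal.Quotient.mkₐ_eq_mk, Ideal.Quotient.eq_zero_iff_mem]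
    exact neg_mem (Ideal.subset_span rfl)
  have hGgen : (Ideal.Quotient.mkₐ A I).comp (aeval (C ω' * X)) ((X : Polynomial A) ^ n - 1) = 0 := by
    have h1 : aeval (C ω' * X) ((X : Polynomial A) ^ n - 1) = -((X : Polynomial A) ^ n + 1) := by
      rw [map_sub, map_one, map_pow, aeval_X, mul_pow, ← C_pow, hω'n]
      simp only [map_neg, map_one]
      ring
    rw [AlgHom.comp_apply, h1, Ideal.Quotient.mkₐ_eq_mk, Ideal.Quotient.eq_zero_iff_mem]
    exact neg_mem (Ideal.subset_span rfl)
  have hFker : ∀ a ∈ I, ((Ideal.Quotient.mkₐ A J).comp (aeval (C ω * X))) a = 0 := by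
    intro a ha
    rw [hI, Ideal.mem_span_singleton] at ha
    obtain ⟨c, rfl⟩ := ha
    rw [map_mul, hFgen, zero_mul]
  have hGker : ∀ a ∈ J, ((Ideal.Quotient.mkₐ A I).comp (aeval (C ω' * X))) a = 0 := by
    intro a ha
    rw [hJ, Ideal.mem_span_singleton] at ha
    obtain ⟨c, rfl⟩ := ha
    rw [map_mul, hGgen, zero_mul]
  let F : (Polynomial A ⧸ I) →ₐ[A] (Polynomial A ⧸ J) :=
    Ideal.Quotient.liftₐ I ((Ideal.Quotient.mkₐ A J).comp (aeval (C ω * X))) hFker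
  let G : (Polynomial A ⧸ J) →ₐ[A] (Polynomial A ⧸ I) :=
    Ideal.Quotient.liftₐ J ((Ideal.Quotient.mkₐ A I).comp (aeval (C ω' * X))) hGker
  have hF : ∀ p : Polynomial A, F (Ideal.Quotient.mk I p) =
      Ideal.Quotient.mk J (aeval (C ω * X) p) := fun p => rfl
  have hG : ∀ p : Polynomial A, G (Ideal.Quotient.mk J p) =
      Ideal.Quotient.mk I (aeval (C ω' * X) p) := fun p => rfl
  have hGF : G.comp F = AlgHom.id A (Polynomial A ⧸ I) := by
    apply Ideal.Quotient.algHom_ext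
    apply Polynomial.algHom_ext
    simp only [AlgHom.comp_apply, Ideal.Quotient.mkₐ_eq_mk, AlgHom.id_apply]
    rw [hF, aeval_X, hG]
    congr 1
    simp only [map_mul, aeval_C, aeval_X, ← mul_assoc]
    rw [show (algebraMap A (Polynomial A)) ω = C ω from rfl, ← C_mul, hinv, map_one, one_mul]
  have hFG : F.comp G = AlgHom.id A (Polynomial A ⧸ J) := by
    apply Ideal.Quotient.algHom_ext
    apply Polynomial.algHom_ext
    simp only [AlgHom.comp_apply, Ideal.Quotient.mkₐ_eq_mk, AlgHom.id_apply]
    rw [hG, aeval_X, hF]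
    congr 1
    simp only [map_mul, aeval_C, aeval_X, ← mul_assoc]
    rw [show (algebraMap A (Polynomial A)) ω' = C ω' from rfl, ← C_mul, mul_comm ω' ω, hinv,
      map_one, one_mul]
  refine ⟨AlgEquiv.ofAlgHom F G hFG hGF, ?_⟩
  intro f
  show F (Ideal.Quotient.mk I f) = _
  rw [hF]
  rw [Polynomial.comp_eq_aeval]
end

section
/- Let A be a commutative ring, n = n₁·n₂ with n₁, n₂ ≥ 1, and let ω ∈ A satisfy ω^n = 1. Set ω₁ = ω^{n₂} and ω₂ = ω^{n₁}. Then for any a_0, …, a_{n−1} ∈ A and all 0 ≤ j < n₂, 0 ≤ l < n₁, the Fourier coefficient ã_{n₁j+l} = ∑_{ν=0}^{n−1} a_ν ω^{(n₁j+l)ν} satisfies ã_{n₁j+l} = ∑_{μ=0}^{n₂−1} ( ω^{μl} · ∑_{ν=0}^{n₁−1} a_{n₂ν+μ} ω₁^{νl} ) · ω₂^{μj}. -/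
/-- (Cooley–Tukey identity.) Let `A` be a commutative ring,
`n = n₁·n₂` with `n₁, n₂ ≥ 1`, and `ω ∈ A` with `ω ^ n = 1`. Set `ω₁ = ω^{n₂}`,
`ω₂ = ω^{n₁}`. Then for all `a_0, …, a_{n−1} ∈ A`, `j < n₂` and `l < n₁`:
`ã_{n₁j+l} = ∑_{μ<n₂} (ω^{μl} · ∑_{ν<n₁} a_{n₂ν+μ} ω₁^{νl}) · ω₂^{μj}`. -/
theorem cooley_tukey (A : Type*) [CommRing A] (n₁ n₂ : ℕ) (hn₁ : 1 ≤ n₁)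
    (hn₂ : 1 ≤ n₂) (ω : A) (hω : ω ^ (n₁ * n₂) = 1) (a : ℕ → A)
    (j l : ℕ) (hj : j < n₂) (hl : l < n₁) :
    ∑ ν ∈ Finset.range (n₁ * n₂), a ν * ω ^ ((n₁ * j + l) * ν) =
      ∑ μ ∈ Finset.range n₂,
        (ω ^ (μ * l) * ∑ ν ∈ Finset.range n₁, a (n₂ * ν + μ) * (ω ^ n₂) ^ (ν * l)) *
          (ω ^ n₁) ^ (μ * j) := by
  have h2 : 0 < n₂ := hn₂
  -- rewrite RHS as a double sum
  have hRHS : ∀ μ ∈ Finset.range n₂,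
      (ω ^ (μ * l) * ∑ ν ∈ Finset.range n₁, a (n₂ * ν + μ) * (ω ^ n₂) ^ (ν * l)) *
          (ω ^ n₁) ^ (μ * j)
      = ∑ ν ∈ Finset.range n₁, a (n₂ * ν + μ) * ω ^ ((n₁ * j + l) * (n₂ * ν + μ)) := by
    intro μ _
    rw [Finset.mul_sum, Finset.sum_mul]
    refine Finset.sum_congr rfl fun ν _ => ?_
    have hexp : (n₁ * j + l) * (n₂ * ν + μ)
        = (n₁ * n₂) * (j * ν) + (μ * l + (n₂ * (ν * l) + n₁ * (μ * j))) := by ring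
    rw [hexp]
    have : ω ^ (n₁ * n₂ * (j * ν)) = 1 := by rw [pow_mul, hω, one_pow]
    rw [pow_add, this, one_mul, pow_add, pow_add, pow_mul, pow_mul]
    ring
  rw [Finset.sum_congr rfl hRHS]
  rw [← Finset.sum_product']
  refine Finset.sum_nbij' (fun ν => (ν % n₂, ν / n₂)) (fun p => n₂ * p.2 + p.1)
    ?_ ?_ ?_ ?_ ?_
  · intro ν hν
    simp only [Finset.mem_range] at hν ⊢
    simp only [Finset.mem_product, Finset.mem_range]
    exact ⟨Nat.mod_lt _ h2, Nat.div_lt_of_lt_mul (by linarith [hν, Nat.mul_comm n₁ n₂])⟩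
  · intro p hp
    simp only [Finset.mem_product, Finset.mem_range] at hp
    simp only [Finset.mem_range]
    calc n₂ * p.2 + p.1 < n₂ * p.2 + n₂ := by omega
      _ = n₂ * (p.2 + 1) := by ring
      _ ≤ n₂ * n₁ := Nat.mul_le_mul_left _ (by omega)
      _ = n₁ * n₂ := Nat.mul_comm _ _
  · intro ν hν
    simp [Nat.div_add_mod, Nat.mul_comm]
  · intro p hp
    simp only [Finset.mem_product, Finset.mem_range] at hp
    have h1 : (n₂ * p.2 + p.1) % n₂ = p.1 := by
      rw [Nat.add_comm, Nat.add_mul_mod_self_left, Nat.mod_eq_of_lt hp.1]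
    have h2' : (n₂ * p.2 + p.1) / n₂ = p.2 := by
      rw [Nat.add_comm, Nat.add_mul_div_left _ _ h2, Nat.div_eq_of_lt hp.1, Nat.zero_add]
    simp [h1, h2']
  · intro ν hν
    simp [Nat.div_add_mod, Nat.mul_comm]
end

section
/- Let A be a commutative ring, m ≥ 1, and let f ∈ A[X]. Let c' be the remainder of f upon division by X^{3m} − 1 and let c be the remainder of f upon division by X^{2m} + X^m + 1. Then for every i with 0 ≤ i < m, the coefficients satisfy c_i = c'_i − c'_{i+2m} and c_{m+i} = c'_{m+i} − c'_{i+2m}, where c_j and c'_j denote the coefficients of X^j in c and c' respectively. -/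
open Polynomial

/-- Let `A` be a commutative ring, `m ≥ 1`, `f ∈ A[X]`. Let `c'` be
the remainder of `f` modulo `X^{3m} − 1` and `c` the remainder of `f` modulo
`X^{2m} + X^m + 1`. Then for all `0 ≤ i < m`: `c_i = c'_i − c'_{i+2m}` and
`c_{m+i} = c'_{m+i} − c'_{i+2m}`. -/
theorem schoenhage_recover (A : Type*) [CommRing A] (m : ℕ) (hm : 1 ≤ m)
    (f : Polynomial A) :
    ∀ i : ℕ, i < m →
      (f %ₘ ((Polynomial.X : Polynomial A) ^ (2 * m) + Polynomial.X ^ m + 1)).coeff i =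
          (f %ₘ ((Polynomial.X : Polynomial A) ^ (3 * m) - 1)).coeff i -
            (f %ₘ ((Polynomial.X : Polynomial A) ^ (3 * m) - 1)).coeff (i + 2 * m) ∧
        (f %ₘ ((Polynomial.X : Polynomial A) ^ (2 * m) + Polynomial.X ^ m + 1)).coeff
            (m + i) =
          (f %ₘ ((Polynomial.X : Polynomial A) ^ (3 * m) - 1)).coeff (m + i) -
            (f %ₘ ((Polynomial.X : Polynomial A) ^ (3 * m) - 1)).coeff (i + 2 * m) := by
  nontriviality A
  set p : Polynomial A := X ^ (3 * m) - 1 with hp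
  set q : Polynomial A := X ^ (2 * m) + X ^ m + 1 with hq
  have hmp : p.Monic := by
    have h1 : (1 : Polynomial A) = C 1 := by simp
    rw [hp, h1]
    exact monic_X_pow_sub_C _ (by omega)
  have h1 : ((X : Polynomial A) ^ m + 1).degree < ((X : Polynomial A) ^ (2 * m)).degree := by
    rw [degree_X_pow]
    refine lt_of_le_of_lt (degree_add_le _ _) ?_
    rw [max_lt_iff]
    constructor
    · rw [degree_X_pow]
      exact_mod_cast by omega
    · exact lt_of_le_of_lt degree_one_le
        (by exact_mod_cast by omega : (0 : WithBot ℕ) < (2 * m : ℕ))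
  have hmq : q.Monic := by
    rw [hq, add_assoc]
    apply monic_X_pow_add
    rw [← degree_X_pow (R := A) (2 * m)]
    exact h1
  have hdegq : q.degree = (2 * m : ℕ) := by
    rw [hq, add_assoc, degree_add_eq_left_of_degree_lt h1, degree_X_pow]
  have hdegp : p.degree = (3 * m : ℕ) := by
    rw [hp, ← C_1]
    exact degree_X_pow_sub_C (by omega) 1
  set c' : Polynomial A := f %ₘ p with hc'
  have hdc' : c'.degree < (3 * m : ℕ) := by
    have := degree_modByMonic_lt f hmp
    rwa [hdegp] at this
  have hc'z : ∀ j, 3 * m ≤ j → c'.coeff j = 0 := fun j hj =>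
    coeff_eq_zero_of_degree_lt (lt_of_lt_of_le hdc' (by exact_mod_cast hj))
  set h' : Polynomial A := ∑ i ∈ Finset.range m, monomial i (c'.coeff (2 * m + i)) with hh'
  have hcoeffh' : ∀ j, h'.coeff j = if j < m then c'.coeff (2 * m + j) else 0 := by
    intro j
    rw [hh', finset_sum_coeff]
    simp only [coeff_monomial]
    by_cases hjm : j < m
    · rw [Finset.sum_eq_single j (fun b _ hb => if_neg hb)
        (fun hj => absurd (Finset.mem_range.2 hjm) hj), if_pos rfl, if_pos hjm]
    · rw [if_neg hjm]
      exact Finset.sum_eq_zero fun b hb =>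
        if_neg (by rintro rfl; exact hjm (Finset.mem_range.1 hb))
  set r : Polynomial A := c' - q * h' with hr
  have hqh' : ∀ j, (q * h').coeff j = h'.coeff (j - 2 * m) * (if 2 * m ≤ j then 1 else 0)
      + h'.coeff (j - m) * (if m ≤ j then 1 else 0) + h'.coeff j := by
    intro j
    have e : q * h' = h' * X ^ (2 * m) + h' * X ^ m + h' := by rw [hq]; ring
    rw [e, coeff_add, coeff_add, coeff_mul_X_pow', coeff_mul_X_pow']
    by_cases e1 : 2 * m ≤ j <;> by_cases e2 : m ≤ j <;> simp [e1, e2]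
  have hrcoeff : ∀ j, j < 2 * m → r.coeff j =
      c'.coeff j - (if j < m then c'.coeff (2 * m + j) else c'.coeff (m + j)) := by
    intro j hj
    rw [hr, coeff_sub, hqh' j]
    by_cases hjm : j < m
    · rw [if_neg (show ¬ 2 * m ≤ j by omega), if_neg (show ¬ m ≤ j by omega),
        hcoeffh' j, if_pos hjm]
      rw [if_pos hjm]
      ring
    · rw [if_neg (show ¬ 2 * m ≤ j by omega), if_pos (show m ≤ j by omega),
        hcoeffh' j, if_neg hjm, hcoeffh' (j - m), if_pos (show j - m < m by omega),
        show 2 * m + (j - m) = m + j by omega]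
      rw [if_neg hjm]
      ring
  have hdr : r.degree < q.degree := by
    rw [hdegq, degree_lt_iff_coeff_zero]
    intro j hj
    have hj' : 2 * m ≤ j := by exact_mod_cast hj
    rw [hr, coeff_sub, hqh' j, hcoeffh' j, if_neg (show ¬ j < m by omega),
      hcoeffh' (j - m), if_neg (show ¬ j - m < m by omega),
      hcoeffh' (j - 2 * m), if_pos hj', if_pos (show m ≤ j by omega)]
    by_cases h3 : j < 3 * m
    · rw [if_pos (show j - 2 * m < m by omega), show 2 * m + (j - 2 * m) = j by omega]
      ring
    · rw [if_neg (show ¬ j - 2 * m < m by omega), hc'z j (by omega)]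
      ring
  have hfq : f %ₘ q = r := by
    have key : r + q * ((X ^ m - 1) * (f /ₘ p) + h') = f := by
      have hpq : p = q * (X ^ m - 1) := by rw [hp, hq]; ring
      have hmd := modByMonic_add_div f p
      rw [hr]
      calc c' - q * h' + q * ((X ^ m - 1) * (f /ₘ p) + h')
          = c' + (q * (X ^ m - 1)) * (f /ₘ p) := by ring
        _ = c' + p * (f /ₘ p) := by rw [← hpq]
        _ = f := hmd
    exact (div_modByMonic_unique _ r hmq ⟨key, hdr⟩).2
  intro i hi
  rw [hfq]
  constructor
  · rw [hrcoeff i (by omega), if_pos hi, show 2 * m + i = i + 2 * m by omega]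
  · rw [hrcoeff (m + i) (by omega), if_neg (by omega),
      show m + (m + i) = i + 2 * m by omega]
end
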